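/- For every median graph G = (V,E) with |V| = n, there exists a finite set of alternatives Y with |Y| ≤ n and a profile R = (R_v)_{v∈V} of pairwise distinct linear orders on Y that is intermediate on G. -/

import Mathlib

open SimpleGraph

/-- `Geo G u w v` : vertex `w` lies geodesically between `u` and `v`
(i.e. on some shortest path from `u` to `v`). -/
def Geo {V : Type*} (G : SimpleGraph V) (u w v : V) : Prop :=
  G.dist u w + G.dist w v = G.dist u v

/-- A set of vertices is geodesically convex if it contains every vertex
lying on a shortest path between two of its members. -/
def GConvex {V : Type*} (G : SimpleGraph V) (C : Set V) : Prop :=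
  ∀ u ∈ C, ∀ v ∈ C, ∀ w, Geo G u w v → w ∈ C

/-- A profile of strict preference relations is intermediate on `G` if every
set `V_{ab}` of voters preferring `a` to `b` is geodesically convex. -/
def Intermediate {V A : Type*} (G : SimpleGraph V) (R : V → A → A → Prop) : Prop :=
  ∀ a b : A, GConvex G {i | R i a b}

/-- A median graph: connected, and every triple of vertices has a unique median. -/
def MedianGraph {V : Type*} (G : SimpleGraph V) : Prop :=
  G.Connected ∧ ∀ u v w : V, ∃! m : V, Geo G u m v ∧ Geo G u m w ∧ Geo G v m w

namespace MG

variable {V : Type*} {G : SimpleGraph V}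

/-- Halfspace: vertices strictly closer to `p` than to `q`. -/
def HS (G : SimpleGraph V) (p q : V) : Set V := {x | G.dist x q = G.dist x p + 1}

lemma geo_symm {u w v : V} (h : Geo G u w v) : Geo G v w u := by
  unfold Geo at *
  rw [G.dist_comm (u := v) (v := w), G.dist_comm (u := w) (v := u), G.dist_comm (u := v) (v := u), ← h]
  omega

lemma geo_left (u v : V) : Geo G u u v := by
  unfold Geo; rw [G.dist_self]; omega

lemma geo_right (u v : V) : Geo G u v v := by
  unfold Geo; rw [G.dist_self]; omega

lemma dist_eq_zero (hc : G.Connected) {u v : V} (h : G.dist u v = 0) : u = v :=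
  (hc.dist_eq_zero_iff).mp h

/-- On an edge, the interval is just the two endpoints. -/
lemma interval_adj (hc : G.Connected) {p q z : V} (hpq : G.Adj p q)
    (hz : Geo G p z q) : z = p ∨ z = q := by
  unfold Geo at hz
  rw [(G.dist_eq_one_iff_adj (u := p) (v := q)).mpr hpq] at hz
  rcases Nat.eq_zero_or_pos (G.dist p z) with h0 | h1
  · left; exact (dist_eq_zero hc h0).symm
  · right; exact dist_eq_zero hc (by omega)

/-- F0 : every vertex is strictly on one side of an edge. -/
lemma adj_dist_cases (hG : MedianGraph G) {p q : V} (hpq : G.Adj p q) (x : V) :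
    x ∈ HS G p q ∨ x ∈ HS G q p := by
  obtain ⟨m, ⟨h1, h2, h3⟩, _⟩ := hG.2 p q x
  have hd : G.dist p q = 1 := (G.dist_eq_one_iff_adj).mpr hpq
  have hd' : G.dist q p = 1 := by rw [G.dist_comm (u := q) (v := p)]; exact hd
  have hxq : G.dist x q = G.dist q x := G.dist_comm
  have hxp : G.dist x p = G.dist p x := G.dist_comm
  rcases interval_adj hG.1 hpq h1 with hm | hm
  · left
    subst hm
    unfold Geo at h3
    show G.dist x q = G.dist x m + 1
    omega
  · right
    subst hm
    unfold Geo at h2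
    show G.dist x p = G.dist x m + 1
    omega

lemma not_both_sides {p q x : V} (h1 : x ∈ HS G p q) (h2 : x ∈ HS G q p) : False := by
  simp only [HS, Set.mem_setOf_eq] at h1 h2; omega

lemma no_triangle (hG : MedianGraph G) {a b c : V}
    (hab : G.Adj a b) (hbc : G.Adj b c) (hac : G.Adj a c) : False := by
  obtain ⟨m, ⟨h1, h2, h3⟩, _⟩ := hG.2 a b c
  rcases interval_adj hG.1 hab h1 with rfl | rfl
  · rcases interval_adj hG.1 (by exact hbc) h3 with rfl | rfl
    · exact hab.ne rfl
    · exact hac.ne rfl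
  · rcases interval_adj hG.1 hac h2 with rfl | rfl
    · exact hab.ne rfl
    · exact hbc.ne rfl

/-- first step along a geodesic -/
lemma exists_first_step (hc : G.Connected) {u v : V} (h : u ≠ v) :
    ∃ w, G.Adj u w ∧ G.dist w v + 1 = G.dist u v := by
  have hpos : 0 < G.dist u v := hc.pos_dist_of_ne h
  obtain ⟨p, hp⟩ := hc.exists_walk_length_eq_dist u v
  cases p with
  | nil => exact absurd rfl h
  | cons hadj p' =>
    rename_i w
    refine ⟨w, hadj, ?_⟩
    simp only [SimpleGraph.Walk.length_cons] at hp
    have h1 : G.dist w v ≤ p'.length := G.dist_le p'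
    have h2 : G.dist u v ≤ G.dist u w + G.dist w v := hc.dist_triangle
    have h3 : G.dist u w ≤ 1 := by
      have := G.dist_le (SimpleGraph.Walk.cons hadj SimpleGraph.Walk.nil)
      simpa using this
    omega

end MG

namespace MG2
open MG
variable {V : Type*} {G : SimpleGraph V}

lemma medK (hG : MedianGraph G) {p q u m : V} (hpq : G.Adj p q)
    (hu : u ∈ HS G p q) (hm2 : Geo G u m p) : m ∈ HS G p q := by
  rcases adj_dist_cases hG hpq m with h | h
  · exact h
  · exfalso
    have ht : G.dist u q ≤ G.dist u m + G.dist m q := hG.1.dist_triangle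
    simp only [HS, Set.mem_setOf_eq] at hu h
    unfold Geo at hm2
    omega

lemma halfspace_convex (hG : MedianGraph G) {p q : V} (hpq : G.Adj p q) :
    GConvex G (HS G p q) := by
  have hc := hG.1
  have key : ∀ D : ℕ, ∀ u v z : V, u ∈ HS G p q → v ∈ HS G p q → Geo G u z v →
      z ∉ HS G p q → G.dist u z + G.dist z v = D → False := by
    intro D
    induction D using Nat.strong_induction_on with
    | _ D IH =>
    intro u v z hu hv huzv hz hD
    have hz' : z ∈ HS G q p := (adj_dist_cases hG hpq z).resolve_left hz
    have hne : u ≠ z := by rintro rfl; exact hz hu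
    obtain ⟨zz, hadj, hzz1⟩ := exists_first_step hc hne
    have hduzz : G.dist u zz = 1 := (G.dist_eq_one_iff_adj).mpr hadj
    unfold Geo at huzv
    -- zz ∈ I(u,v), and Geo zz z v
    have tri1 : G.dist u v ≤ G.dist u zz + G.dist zz v := hc.dist_triangle
    have tri2 : G.dist zz v ≤ G.dist zz z + G.dist z v := hc.dist_triangle
    have hzzv : G.dist zz v + 1 = G.dist u v := by omega
    rcases adj_dist_cases hG hpq zz with hzzW | hzzW'
    · -- zz on the p-side: shrink
      exact IH (G.dist zz z + G.dist z v) (by omega) zz v z hzzW hv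
        (by unfold Geo; omega) hz rfl
    · -- zz on the q-side
      have hzznev : zz ≠ v := by
        rintro rfl; exact not_both_sides hv hzzW'
      obtain ⟨q1, hadjv, hq1d⟩ := exists_first_step hc (Ne.symm hzznev)
      have hdvq1 : G.dist v q1 = 1 := (G.dist_eq_one_iff_adj).mpr hadjv
      have cvz : G.dist v zz = G.dist zz v := G.dist_comm
      have cq1z : G.dist q1 zz = G.dist zz q1 := G.dist_comm
      have cq1v : G.dist q1 v = G.dist v q1 := G.dist_comm
      have czzu : G.dist zz u = G.dist u zz := G.dist_comm
      -- dist zz q1 = D - 2 ; Geo u zz q1 ; Geo u q1 v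
      have triq1 : G.dist u q1 ≤ G.dist u zz + G.dist zz q1 := hc.dist_triangle
      have triq2 : G.dist u v ≤ G.dist u q1 + G.dist q1 v := hc.dist_triangle
      have hq1uv : G.dist u q1 + G.dist q1 v = G.dist u v := by omega
      rcases adj_dist_cases hG hpq q1 with hq1W | hq1W'
      · -- q1 on the p-side: shrink
        have hDge : G.dist u z ≥ 1 := by
          have := hc.pos_dist_of_ne hne; omega
        exact IH (G.dist u zz + G.dist zz q1) (by omega) u q1 zz hu hq1W
          (by unfold Geo; omega) (fun h => not_both_sides h hzzW') rfl
      · -- main case: both zz and q1 on q-side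
        simp only [HS, Set.mem_setOf_eq] at hu hv hzzW' hq1W'
        -- parallel arithmetic : dist zz q = dist u p, dist q1 q = dist v p
        have a1 : G.dist zz q ≤ G.dist zz u + G.dist u q := hc.dist_triangle
        have a2 : G.dist u q ≤ G.dist u zz + G.dist zz q := hc.dist_triangle
        have a3 : G.dist zz p ≤ G.dist zz u + G.dist u p := hc.dist_triangle
        have a4 : G.dist u p ≤ G.dist u zz + G.dist zz p := hc.dist_triangle
        have hzzq : G.dist zz q = G.dist u p := by omega
        have b1 : G.dist q1 q ≤ G.dist q1 v + G.dist v q := hc.dist_triangle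
        have b2 : G.dist v q ≤ G.dist v q1 + G.dist q1 q := hc.dist_triangle
        have b3 : G.dist q1 p ≤ G.dist q1 v + G.dist v p := hc.dist_triangle
        have b4 : G.dist v p ≤ G.dist v q1 + G.dist q1 p := hc.dist_triangle
        have hq1q : G.dist q1 q = G.dist v p := by omega
        -- median m of (u,v,p)
        obtain ⟨m, ⟨m1, m2, m3⟩, _⟩ := hG.2 u v p
        have hmW : m ∈ HS G p q := medK hG hpq (by exact hu) m2
        -- median w2 of (zz,q1,q)
        obtain ⟨w2, ⟨n1, n2, n3⟩, _⟩ := hG.2 zz q1 q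
        have hmW' : w2 ∈ HS G q p := medK hG hpq.symm (by exact hzzW') n2
        simp only [HS, Set.mem_setOf_eq] at hmW hmW'
        unfold Geo at m1 m2 m3 n1 n2 n3
        -- w2 is in I(u,v) with the right distances
        have du : G.dist u w2 ≤ G.dist u zz + G.dist zz w2 := hc.dist_triangle
        have dv : G.dist v w2 ≤ G.dist v q1 + G.dist q1 w2 := hc.dist_triangle
        have cq1w2 : G.dist q1 w2 = G.dist w2 q1 := G.dist_comm
        have trw : G.dist u v ≤ G.dist u w2 + G.dist w2 v := hc.dist_triangle
        have cw2v : G.dist w2 v = G.dist v w2 := G.dist_comm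
        have hzzq1 : G.dist zz q1 + 1 = G.dist zz v := by omega
        have huw2 : G.dist u w2 = 1 + G.dist zz w2 := by omega
        have hvw2 : G.dist v w2 = 1 + G.dist q1 w2 := by omega
        have hw2uv : G.dist u w2 + G.dist w2 v = G.dist u v := by omega
        -- both m and w2 are medians of (u,v,q) : contradiction
        obtain ⟨mm, _, huniq⟩ := hG.2 u v q
        have e1 : m = mm := huniq m ⟨m1, by unfold Geo; omega, by unfold Geo; omega⟩
        have e2 : w2 = mm := huniq w2
          ⟨by unfold Geo; omega, by unfold Geo; omega, by unfold Geo; omega⟩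
        rw [← e1] at e2
        rw [← e2] at hmW
        omega
  intro u hu v hv z hz
  by_contra hcon
  exact key _ u v z hu hv hz hcon rfl

end MG2

namespace MG3
open MG MG2
variable {V : Type*} {G : SimpleGraph V}

lemma gconvex_inter {C D : Set V} (hC : GConvex G C) (hD : GConvex G D) :
    GConvex G (C ∩ D) := fun u hu v hv w hw =>
  ⟨hC u hu.1 v hv.1 w hw, hD u hu.2 v hv.2 w hw⟩

lemma gconvex_empty : GConvex G (∅ : Set V) := fun u hu => absurd hu (by simp)

/-- Gate property (Lemma L): for a crossing edge `(c,c')` and any `x` on the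
`q`-side, `dist x c = dist x c' + 1`. -/
lemma gate (hG : MedianGraph G) {p q c c' : V} (hpq : G.Adj p q) (hcc' : G.Adj c c')
    (hcW : c ∈ HS G p q) (hc'W : c' ∉ HS G p q)
    {x : V} (hx : x ∉ HS G p q) : G.dist x c = G.dist x c' + 1 := by
  obtain ⟨m, ⟨h1, h2, h3⟩, _⟩ := hG.2 c c' x
  have hd : G.dist c c' = 1 := (G.dist_eq_one_iff_adj).mpr hcc'
  rcases interval_adj hG.1 hcc' h1 with hm | hm
  · exfalso
    subst hm
    have hx' : x ∈ HS G q p := (adj_dist_cases hG hpq x).resolve_left hx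
    have hc'' : c' ∈ HS G q p := (adj_dist_cases hG hpq c').resolve_left hc'W
    exact not_both_sides hcW
      (halfspace_convex hG hpq.symm c' hc'' x hx' m h3)
  · subst hm
    unfold Geo at h2
    have c1 : G.dist x m = G.dist m x := G.dist_comm
    have c2 : G.dist x c = G.dist c x := G.dist_comm
    omega

/-- symmetric gate : for any `y` on the `p`-side, `dist y c' = dist y c + 1`. -/
lemma gate' (hG : MedianGraph G) {p q c c' : V} (hpq : G.Adj p q) (hcc' : G.Adj c c')
    (hcW : c ∈ HS G p q) (hc'W : c' ∉ HS G p q)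
    {y : V} (hy : y ∈ HS G p q) : G.dist y c' = G.dist y c + 1 := by
  have hc'' : c' ∈ HS G q p := (adj_dist_cases hG hpq c').resolve_left hc'W
  have hcn : c ∉ HS G q p := fun h => not_both_sides hcW h
  have hyn : y ∉ HS G q p := fun h => not_both_sides hy h
  exact gate hG hpq.symm hcc'.symm hc'' hcn hyn

/-- each vertex on the q-side has at most one neighbour on the p-side -/
lemma cross_unique (hG : MedianGraph G) {p q x' y z : V} (hpq : G.Adj p q)
    (hx' : x' ∉ HS G p q) (hy : y ∈ HS G p q) (hz : z ∈ HS G p q)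
    (hay : G.Adj x' y) (haz : G.Adj x' z) : y = z := by
  by_contra hne
  have d1 : G.dist y x' = 1 := (G.dist_eq_one_iff_adj).mpr hay.symm
  have d2 : G.dist x' z = 1 := (G.dist_eq_one_iff_adj).mpr haz
  have tr : G.dist y z ≤ G.dist y x' + G.dist x' z := hG.1.dist_triangle
  have hpos : 0 < G.dist y z := hG.1.pos_dist_of_ne hne
  rcases (by omega : G.dist y z = 1 ∨ G.dist y z = 2) with h | h
  · exact no_triangle hG hay ((G.dist_eq_one_iff_adj).mp h) haz
  · exact hx' (halfspace_convex hG hpq y hy z hz x' (by unfold Geo; omega))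

/-- a convex set containing a point of `A` and a point outside `A` contains a
crossing edge -/
lemma exists_crossing (hc : G.Connected) {C A : Set V} (hC : GConvex G C) :
    ∀ (n : ℕ) (x y : V), G.dist x y = n → x ∈ C → y ∈ C → x ∈ A → y ∉ A →
    ∃ cc dd, cc ∈ C ∧ dd ∈ C ∧ cc ∈ A ∧ dd ∉ A ∧ G.Adj cc dd := by
  intro n
  induction n using Nat.strong_induction_on with
  | _ n IH =>
  intro x y hdist hxC hyC hxA hyA
  have hne : x ≠ y := by rintro rfl; exact hyA hxA
  obtain ⟨w, hadj, hw⟩ := exists_first_step hc hne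
  have hd1 : G.dist x w = 1 := (G.dist_eq_one_iff_adj).mpr hadj
  have hwC : w ∈ C := hC x hxC y hyC w (by unfold Geo; omega)
  by_cases hwA : w ∈ A
  · have hpos : 0 < G.dist x y := hc.pos_dist_of_ne hne
    exact IH (G.dist w y) (by omega) w y rfl hwC hyC hwA hyA
  · exact ⟨x, w, hxC, hwC, hxA, hwA, hadj⟩

end MG3

namespace MG4
open MG MG2 MG3
variable {V : Type*} {G : SimpleGraph V} [DecidableEq V]

lemma self_mem_HS (hpq : G.Adj p q) : p ∈ HS G p q := by
  show G.dist p q = G.dist p p + 1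
  rw [G.dist_self, (G.dist_eq_one_iff_adj).mpr hpq]

lemma other_not_mem_HS (hc : G.Connected) (hpq : G.Adj p q) : q ∉ HS G p q := by
  intro h
  have : G.dist q q = G.dist q p + 1 := h
  rw [G.dist_self] at this
  omega

/-- F5 : a halfspace of minimal cardinality is peripheral. -/
lemma peripheral (hG : MedianGraph G) (U : Finset V) (hconv : GConvex G ↑U)
    {p q : V} (hp : p ∈ U) (hq : q ∈ U) (hpq : G.Adj p q)
    (hmin : ∀ p' q', p' ∈ U → q' ∈ U → G.Adj p' q' →
      (U.filter (fun x => G.dist x q = G.dist x p + 1)).card ≤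
        (U.filter (fun x => G.dist x q' = G.dist x p' + 1)).card) :
    ∀ w ∈ U, w ∈ HS G p q → ∃ y, y ∈ U ∧ y ∉ HS G p q ∧ G.Adj w y := by
  intro w hwU hwW
  by_contra hno
  set A : Set V := {x | x ∈ U ∧ x ∈ HS G p q ∧ ∃ y, y ∈ U ∧ y ∉ HS G p q ∧ G.Adj x y}
    with hA
  have hCconv : GConvex G (↑U ∩ HS G p q) := gconvex_inter hconv (halfspace_convex hG hpq)
  have hpA : p ∈ A := ⟨hp, self_mem_HS hpq, q, hq, other_not_mem_HS hG.1 hpq, hpq⟩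
  have hwA : w ∉ A := fun h => hno h.2.2
  obtain ⟨c, d, hcC, hdC, hcA, hdA, hadj⟩ :=
    exists_crossing hG.1 hCconv (G.dist p w) p w rfl
      ⟨hp, self_mem_HS hpq⟩ ⟨hwU, hwW⟩ hpA hwA
  obtain ⟨hcU, hcW, c', hc'U, hc'W, hacc'⟩ := hcA
  have hdU : d ∈ U := hdC.1
  have hdW : d ∈ HS G p q := hdC.2
  -- the halfspace of the edge (d,c) is strictly smaller : contradiction
  have hsub : U.filter (fun x => G.dist x c = G.dist x d + 1) ⊆
      U.filter (fun x => G.dist x q = G.dist x p + 1) := by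
    intro x hx
    rw [Finset.mem_filter] at hx ⊢
    obtain ⟨hxU, hxc⟩ := hx
    refine ⟨hxU, ?_⟩
    by_contra hxn
    have hxn' : x ∉ HS G p q := hxn
    -- gate along edge (c,c')
    have hg : G.dist x c = G.dist x c' + 1 := gate hG hpq hacc' hcW hc'W hxn'
    -- dist d c' = 2
    have hdc : G.dist d c = 1 := (G.dist_eq_one_iff_adj).mpr hadj.symm
    have hdc'ne : d ≠ c' := by rintro rfl; exact hc'W hdW
    have hdc'na : ¬ G.Adj d c' := fun h => hdA ⟨hdU, hdW, c', hc'U, hc'W, h⟩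
    have hdc'2 : G.dist d c' = 2 := by
      have h1 : G.dist d c' ≤ G.dist d c + G.dist c c' := hG.1.dist_triangle
      have h2 : G.dist c c' = 1 := (G.dist_eq_one_iff_adj).mpr hacc'
      have h3 : G.dist d c' ≠ 0 := fun h => hdc'ne (dist_eq_zero hG.1 h)
      have h4 : G.dist d c' ≠ 1 := fun h => hdc'na ((G.dist_eq_one_iff_adj).mp h)
      omega
    obtain ⟨μ, ⟨g1, g2, g3⟩, _⟩ := hG.2 d c' x
    unfold Geo at g1 g2 g3
    have cdx : G.dist d x = G.dist x d := G.dist_comm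
    have cc'x : G.dist c' x = G.dist x c' := G.dist_comm
    have cmc : G.dist c' μ = G.dist μ c' := G.dist_comm
    have hdμ : G.dist d μ = 1 := by omega
    have hc'μ : G.dist μ c' = 1 := by omega
    have hadjdμ : G.Adj d μ := (G.dist_eq_one_iff_adj).mp hdμ
    have hμU : μ ∈ U := hconv d hdU c' hc'U μ (by unfold Geo; omega)
    by_cases hμW : μ ∈ HS G p q
    · have : μ = c := cross_unique hG hpq hc'W hμW hcW
        ((G.dist_eq_one_iff_adj).mp (by rw [G.dist_comm (u := c') (v := μ)]; exact hc'μ))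
        hacc'.symm
      subst this
      have cxc : G.dist x μ = G.dist μ x := G.dist_comm
      omega
    · exact hdA ⟨hdU, hdW, μ, hμU, hμW, hadjdμ⟩
  have hcnot : c ∉ U.filter (fun x => G.dist x c = G.dist x d + 1) := by
    simp only [Finset.mem_filter, not_and]
    intro _
    rw [G.dist_self]
    have : G.dist c d = 1 := (G.dist_eq_one_iff_adj).mpr hadj
    omega
  have hcin : c ∈ U.filter (fun x => G.dist x q = G.dist x p + 1) := by
    rw [Finset.mem_filter]; exact ⟨hcU, hcW⟩
  have hlt : (U.filter (fun x => G.dist x c = G.dist x d + 1)).card <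
      (U.filter (fun x => G.dist x q = G.dist x p + 1)).card :=
    Finset.card_lt_card ⟨hsub, fun h => hcnot (h hcin)⟩
  exact absurd (hmin d c hdU hcU hadj.symm) (by omega)

/-- matched cross-edges preserve distance -/
lemma pi_dist (hG : MedianGraph G) {p q a b a' b' : V} (hpq : G.Adj p q)
    (ha : a ∈ HS G p q) (hb : b ∈ HS G p q) (ha' : a' ∉ HS G p q) (hb' : b' ∉ HS G p q)
    (haa' : G.Adj a a') (hbb' : G.Adj b b') : G.dist a' b' = G.dist a b := by
  have h1 : G.dist b a' = G.dist b a + 1 := gate' hG hpq haa' ha ha' hb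
  have h2 : G.dist a' b = G.dist a' b' + 1 := gate hG hpq hbb' hb hb' ha'
  have c1 : G.dist b a' = G.dist a' b := G.dist_comm
  have c2 : G.dist b a = G.dist a b := G.dist_comm
  omega

end MG4

namespace MG5
open MG MG2 MG3 MG4
variable {V : Type*} {G : SimpleGraph V}

theorem inner [DecidableEq V] (hG : MedianGraph G) :
    ∀ (n : ℕ) (U : Finset V), U.card = n → U.Nonempty → GConvex G ↑U →
    ∃ m : ℕ, 1 ≤ m ∧ m ≤ U.card ∧ ∃ R : V → Fin m → Fin m → Prop,
      (∀ v ∈ U, IsStrictTotalOrder (Fin m) (R v)) ∧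
      (∀ v ∈ U, ∀ w ∈ U, v ≠ w → R v ≠ R w) ∧
      (∀ a b : Fin m, GConvex G {i | i ∈ U ∧ R i a b}) := by
  classical
  intro n
  induction n using Nat.strong_induction_on with
  | _ n IH =>
  intro U hcard hne hconv
  by_cases hsmall : U.card ≤ 1
  · -- base case : single vertex
    refine ⟨1, le_refl 1, Finset.card_pos.mpr hne, fun _ _ _ => False, ?_, ?_, ?_⟩
    · intro v _
      exact { trichotomous := fun a b _ _ => Subsingleton.elim a b,
              irrefl := fun a h => h,
              trans := fun a b c h _ => h.elim }
    · intro v hv w hw hvw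
      exact absurd (Finset.card_le_one.mp hsmall v hv w hw) hvw
    · intro a b
      have : {i | i ∈ U ∧ False} = (∅ : Set V) := by ext x; simp
      rw [this]; exact gconvex_empty
  · -- inductive step
    -- find an adjacent pair inside U
    obtain ⟨x0, hx0, y0, hy0, hxy0⟩ := Finset.one_lt_card.mp (show 1 < U.card by omega)
    obtain ⟨w0, hadj0, hw0d⟩ := exists_first_step hG.1 hxy0
    have hw0U : w0 ∈ U := by
      have hd : G.dist x0 w0 = 1 := (G.dist_eq_one_iff_adj).mpr hadj0
      exact Finset.mem_coe.mp (hconv x0 hx0 y0 hy0 w0 (by unfold Geo; omega))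
    set P := (U ×ˢ U).filter (fun e => G.Adj e.1 e.2) with hP
    have hPne : P.Nonempty := by
      refine ⟨(x0, w0), ?_⟩
      simp only [P, Finset.mem_filter, Finset.mem_product]
      exact ⟨⟨hx0, hw0U⟩, hadj0⟩
    obtain ⟨e, heP, hminf⟩ := Finset.exists_min_image P
      (fun e => (U.filter (fun x => G.dist x e.2 = G.dist x e.1 + 1)).card) hPne
    obtain ⟨p, q⟩ := e
    simp only [P, Finset.mem_filter, Finset.mem_product] at heP
    obtain ⟨⟨hp, hq⟩, hpq⟩ := heP
    set WU := U.filter (fun x => G.dist x q = G.dist x p + 1) with hWU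
    set U' := U \ WU with hU'
    have hmemW : ∀ x, x ∈ WU ↔ x ∈ U ∧ x ∈ HS G p q := by
      intro x; rw [hWU, Finset.mem_filter]; rfl
    have hmemU' : ∀ x, x ∈ U' ↔ x ∈ U ∧ x ∉ HS G p q := by
      intro x
      rw [hU', Finset.mem_sdiff, hmemW]
      constructor
      · rintro ⟨h1, h2⟩; exact ⟨h1, fun h => h2 ⟨h1, h⟩⟩
      · rintro ⟨h1, h2⟩; exact ⟨h1, fun h => h2 h.2⟩
    have hpW : p ∈ WU := (hmemW p).mpr ⟨hp, self_mem_HS hpq⟩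
    have hqU' : q ∈ U' := (hmemU' q).mpr ⟨hq, other_not_mem_HS hG.1 hpq⟩
    have hWcoe : (↑WU : Set V) = ↑U ∩ HS G p q := by
      ext x
      simp only [Finset.mem_coe, hmemW, Set.mem_inter_iff]
    have hU'coe : (↑U' : Set V) = ↑U ∩ HS G q p := by
      ext x
      simp only [Finset.mem_coe, hmemU', Set.mem_inter_iff]
      constructor
      · rintro ⟨h1, h2⟩
        exact ⟨h1, (adj_dist_cases hG hpq x).resolve_left h2⟩
      · rintro ⟨h1, h2⟩
        exact ⟨h1, fun h => not_both_sides h h2⟩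
    have hWconv : GConvex G ↑WU := by
      rw [hWcoe]; exact gconvex_inter hconv (halfspace_convex hG hpq)
    have hU'conv : GConvex G ↑U' := by
      rw [hU'coe]; exact gconvex_inter hconv (halfspace_convex hG hpq.symm)
    -- peripherality and matching
    have hper := peripheral hG U hconv hp hq hpq
      (fun p' q' h1 h2 h3 => hminf (p', q') (by
        simp only [P, Finset.mem_filter, Finset.mem_product]; exact ⟨⟨h1, h2⟩, h3⟩))
    have hper' : ∀ w : V, ∃ y, w ∈ WU → (y ∈ U' ∧ G.Adj w y ∧ y ∉ HS G p q) := by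
      intro w
      by_cases hw : w ∈ WU
      · obtain ⟨hw1, hw2⟩ := (hmemW w).mp hw
        obtain ⟨y, hy1, hy2, hy3⟩ := hper w hw1 hw2
        exact ⟨y, fun _ => ⟨(hmemU' y).mpr ⟨hy1, hy2⟩, hy3, hy2⟩⟩
      · exact ⟨w, fun h => absurd h hw⟩
    choose π hπ using hper'
    have hπU' : ∀ w ∈ WU, π w ∈ U' := fun w hw => (hπ w hw).1
    have hπadj : ∀ w ∈ WU, G.Adj w (π w) := fun w hw => (hπ w hw).2.1
    have hπout : ∀ w ∈ WU, π w ∉ HS G p q := fun w hw => (hπ w hw).2.2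
    have hWHS : ∀ w ∈ WU, w ∈ HS G p q := fun w hw => ((hmemW w).mp hw).2
    have hU'HS : ∀ w ∈ U', w ∉ HS G p q := fun w hw => ((hmemU' w).mp hw).2
    -- cardinalities
    have hWsub : WU ⊆ U := Finset.filter_subset _ _
    have hU'card : U'.card = U.card - WU.card := Finset.card_sdiff_of_subset hWsub
    have hW1 : 1 ≤ WU.card := Finset.card_pos.mpr ⟨p, hpW⟩
    have hWle : WU.card ≤ U.card := Finset.card_le_card hWsub
    -- induction hypothesis on U'
    obtain ⟨m, hm1, hmcard, R', hSTO, hdist, hconvS⟩ :=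
      IH U'.card (by omega) U' rfl ⟨q, hqU'⟩ hU'conv
    -- the extended profile
    set bs : V → V := fun v => if v ∈ WU then π v else v with hbs
    have hbsU' : ∀ v ∈ U, bs v ∈ U' := by
      intro v hv
      by_cases h : v ∈ WU
      · simp only [hbs, if_pos h]; exact hπU' v h
      · simp only [hbs, if_neg h]; exact (hmemU' v).mpr ⟨hv, fun hh => h ((hmemW v).mpr ⟨hv, hh⟩)⟩
    set R'' : V → Fin (m+1) → Fin (m+1) → Prop := fun v a b =>
      if ha : (a : ℕ) < m then
        (if hb : (b : ℕ) < m then R' (bs v) ⟨a, ha⟩ ⟨b, hb⟩ else v ∉ WU)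
      else ((b : ℕ) < m ∧ v ∈ WU) with hR''
    have hRR : ∀ v (a b : Fin (m+1)) (ha : (a:ℕ) < m) (hb : (b:ℕ) < m),
        R'' v a b ↔ R' (bs v) ⟨a, ha⟩ ⟨b, hb⟩ := by
      intro v a b ha hb; simp only [hR'', dif_pos ha, dif_pos hb]
    have hRL : ∀ v (a b : Fin (m+1)) (ha : (a:ℕ) < m) (hb : ¬(b:ℕ) < m),
        R'' v a b ↔ v ∉ WU := by
      intro v a b ha hb; simp only [hR'', dif_pos ha, dif_neg hb]
    have hLR : ∀ v (a b : Fin (m+1)) (ha : ¬(a:ℕ) < m) (hb : (b:ℕ) < m),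
        R'' v a b ↔ v ∈ WU := by
      intro v a b ha hb; simp only [hR'', dif_neg ha, hb, true_and]
    have hLL : ∀ v (a b : Fin (m+1)) (ha : ¬(a:ℕ) < m) (hb : ¬(b:ℕ) < m),
        ¬ R'' v a b := by
      intro v a b ha hb h
      simp only [hR'', dif_neg ha] at h
      exact hb h.1
    -- gate relative to the matching
    have hgd : ∀ w ∈ WU, ∀ x ∈ U', G.dist x w = G.dist x (π w) + 1 := by
      intro w hw x hx
      exact gate hG hpq (hπadj w hw) (hWHS w hw) (hπout w hw) (hU'HS x hx)
    have hkey : ∀ x ∈ U, ∀ y ∈ U, ∀ z, Geo G x z y →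
        z ∈ U ∧ Geo G (bs x) (bs z) (bs y) := by
      have mixed : ∀ x ∈ U, ∀ y ∈ U, x ∉ WU → y ∈ WU → ∀ z, Geo G x z y →
          Geo G (bs x) (bs z) (bs y) := by
        intro x hx y hy hxW hyW z hgz
        have hzU : z ∈ U := Finset.mem_coe.mp
          (hconv x (Finset.mem_coe.mpr hx) y (Finset.mem_coe.mpr hy) z hgz)
        have hxU' : x ∈ U' := (hmemU' x).mpr ⟨hx, fun h => hxW ((hmemW x).mpr ⟨hx, h⟩)⟩
        by_cases hzW : z ∈ WU
        · simp only [hbs, if_neg hxW, if_pos hzW, if_pos hyW]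
          unfold Geo at hgz ⊢
          have e1 : G.dist x z = G.dist x (π z) + 1 := hgd z hzW x hxU'
          have e2 : G.dist (π z) (π y) = G.dist z y :=
            pi_dist hG hpq (hWHS z hzW) (hWHS y hyW) (hπout z hzW) (hπout y hyW)
              (hπadj z hzW) (hπadj y hyW)
          have e3 : G.dist x y = G.dist x (π y) + 1 := hgd y hyW x hxU'
          omega
        · have hzU' : z ∈ U' := (hmemU' z).mpr ⟨hzU, fun h => hzW ((hmemW z).mpr ⟨hzU, h⟩)⟩
          simp only [hbs, if_neg hxW, if_neg hzW, if_pos hyW]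
          unfold Geo at hgz ⊢
          have e3 : G.dist x y = G.dist x (π y) + 1 := hgd y hyW x hxU'
          have e4 : G.dist z y = G.dist z (π y) + 1 := hgd y hyW z hzU'
          omega
      intro x hx y hy z hgz
      have hzU : z ∈ U := Finset.mem_coe.mp
        (hconv x (Finset.mem_coe.mpr hx) y (Finset.mem_coe.mpr hy) z hgz)
      refine ⟨hzU, ?_⟩
      by_cases hxW : x ∈ WU <;> by_cases hyW : y ∈ WU
      · have hzW : z ∈ WU := Finset.mem_coe.mp
          (hWconv x (Finset.mem_coe.mpr hxW) y (Finset.mem_coe.mpr hyW) z hgz)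
        simp only [hbs, if_pos hxW, if_pos hyW, if_pos hzW]
        unfold Geo at hgz ⊢
        have e1 : G.dist (π x) (π z) = G.dist x z :=
          pi_dist hG hpq (hWHS x hxW) (hWHS z hzW) (hπout x hxW) (hπout z hzW)
            (hπadj x hxW) (hπadj z hzW)
        have e2 : G.dist (π z) (π y) = G.dist z y :=
          pi_dist hG hpq (hWHS z hzW) (hWHS y hyW) (hπout z hzW) (hπout y hyW)
            (hπadj z hzW) (hπadj y hyW)
        have e3 : G.dist (π x) (π y) = G.dist x y :=
          pi_dist hG hpq (hWHS x hxW) (hWHS y hyW) (hπout x hxW) (hπout y hyW)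
            (hπadj x hxW) (hπadj y hyW)
        omega
      · exact geo_symm (mixed y hy x hx hyW hxW z (geo_symm hgz))
      · exact mixed x hx y hy hxW hyW z hgz
      · have hxU' : x ∈ U' := (hmemU' x).mpr ⟨hx, fun h => hxW ((hmemW x).mpr ⟨hx, h⟩)⟩
        have hyU' : y ∈ U' := (hmemU' y).mpr ⟨hy, fun h => hyW ((hmemW y).mpr ⟨hy, h⟩)⟩
        have hzU' : z ∈ U' := Finset.mem_coe.mp
          (hU'conv x (Finset.mem_coe.mpr hxU') y (Finset.mem_coe.mpr hyU') z hgz)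
        have hzW : z ∉ WU := fun h => (hmemU' z).mp hzU' |>.2 (((hmemW z).mp h).2)
        simp only [hbs, if_neg hxW, if_neg hyW, if_neg hzW]
        exact hgz
    refine ⟨m + 1, by omega, by omega, R'', ?_, ?_, ?_⟩
    · -- strict total orders
      intro v hv
      haveI := hSTO (bs v) (hbsU' v hv)
      refine { trichotomous := ?_, irrefl := ?_, trans := ?_ }
      · intro a b hn1 hn2
        suffices H : R'' v a b ∨ a = b ∨ R'' v b a by
          rcases H with h | h | h
          exacts [absurd h hn1, h, absurd h hn2]
        by_cases ha : (a:ℕ) < m <;> by_cases hb : (b:ℕ) < m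
        · rcases trichotomous_of (R' (bs v)) ⟨a, ha⟩ ⟨b, hb⟩ with h | h | h
          · exact Or.inl ((hRR v a b ha hb).mpr h)
          · have hval' := congrArg Fin.val h
            exact Or.inr (Or.inl (Fin.ext hval'))
          · exact Or.inr (Or.inr ((hRR v b a hb ha).mpr h))
        · by_cases hvW : v ∈ WU
          · exact Or.inr (Or.inr ((hLR v b a hb ha).mpr hvW))
          · exact Or.inl ((hRL v a b ha hb).mpr hvW)
        · by_cases hvW : v ∈ WU
          · exact Or.inl ((hLR v a b ha hb).mpr hvW)
          · exact Or.inr (Or.inr ((hRL v b a hb ha).mpr hvW))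
        · refine Or.inr (Or.inl (Fin.ext ?_))
          have h1 := a.isLt
          have h2 := b.isLt
          omega
      · intro a h
        by_cases ha : (a:ℕ) < m
        · exact absurd ((hRR v a a ha ha).mp h) (irrefl_of (R' (bs v)) _)
        · exact hLL v a a ha ha h
      · intro a b c hab hbc
        by_cases ha : (a:ℕ) < m <;> by_cases hb : (b:ℕ) < m <;>
          by_cases hc : (c:ℕ) < m
        · exact (hRR v a c ha hc).mpr (trans_of (R' (bs v))
            ((hRR v a b ha hb).mp hab) ((hRR v b c hb hc).mp hbc))
        · exact (hRL v a c ha hc).mpr ((hRL v b c hb hc).mp hbc)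
        · exact absurd ((hLR v b c hb hc).mp hbc) ((hRL v a b ha hb).mp hab)
        · exact absurd hbc (hLL v b c hb hc)
        · exact (hLR v a c ha hc).mpr ((hLR v a b ha hb).mp hab)
        · exact absurd ((hLR v a b ha hb).mp hab) ((hRL v b c hb hc).mp hbc)
        · exact absurd hab (hLL v a b ha hb)
        · exact absurd hab (hLL v a b ha hb)
    · -- pairwise distinct
      intro v hv w hw hvw heq
      have hval : ∀ a b : Fin (m+1), R'' v a b = R'' w a b := by
        intro a b; rw [heq]
      have main : R' (bs v) ≠ R' (bs w) → False := by
        intro hne'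
        apply hne'
        funext i j
        have hia : ((⟨(i:ℕ), by omega⟩ : Fin (m+1)) : ℕ) < m := i.isLt
        have hjb : ((⟨(j:ℕ), by omega⟩ : Fin (m+1)) : ℕ) < m := j.isLt
        have kv := hRR v ⟨(i:ℕ), by omega⟩ ⟨(j:ℕ), by omega⟩ hia hjb
        have kw := hRR w ⟨(i:ℕ), by omega⟩ ⟨(j:ℕ), by omega⟩ hia hjb
        simp only [Fin.eta] at kv kw
        calc R' (bs v) i j = R'' v ⟨(i:ℕ), by omega⟩ ⟨(j:ℕ), by omega⟩ :=
              (propext kv).symm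
          _ = R'' w ⟨(i:ℕ), by omega⟩ ⟨(j:ℕ), by omega⟩ := hval _ _
          _ = R' (bs w) i j := propext kw
      by_cases hvW : v ∈ WU <;> by_cases hwW : w ∈ WU
      · apply main
        have hπne : π v ≠ π w := by
          intro he
          exact hvw (cross_unique hG hpq (hπout v hvW) (hWHS v hvW) (hWHS w hwW)
            (hπadj v hvW).symm (he ▸ (hπadj w hwW).symm))
        have hbv : bs v = π v := by simp only [hbs, if_pos hvW]
        have hbw : bs w = π w := by simp only [hbs, if_pos hwW]
        rw [hbv, hbw]
        exact hdist (π v) (hπU' v hvW) (π w) (hπU' w hwW) hπne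
      · -- v ∈ WU, w ∉ : compare on (last, 0)
        exfalso
        have hm0 : (0:ℕ) < m := hm1
        have hlst : ¬ ((⟨m, by omega⟩ : Fin (m+1)) : ℕ) < m := by simp
        have h1 : R'' v ⟨m, by omega⟩ ⟨0, by omega⟩ :=
          (hLR v _ _ hlst hm0).mpr hvW
        rw [hval] at h1
        exact hwW ((hLR w _ _ hlst hm0).mp h1)
      · exfalso
        have hm0 : (0:ℕ) < m := hm1
        have hlst : ¬ ((⟨m, by omega⟩ : Fin (m+1)) : ℕ) < m := by simp
        have h1 : R'' w ⟨m, by omega⟩ ⟨0, by omega⟩ :=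
          (hLR w _ _ hlst hm0).mpr hwW
        rw [← hval] at h1
        exact hvW ((hLR v _ _ hlst hm0).mp h1)
      · apply main
        have hbv : bs v = v := by simp only [hbs, if_neg hvW]
        have hbw : bs w = w := by simp only [hbs, if_neg hwW]
        rw [hbv, hbw]
        have hvU' : v ∈ U' := (hmemU' v).mpr ⟨hv, fun h => hvW ((hmemW v).mpr ⟨hv, h⟩)⟩
        have hwU' : w ∈ U' := (hmemU' w).mpr ⟨hw, fun h => hwW ((hmemW w).mpr ⟨hw, h⟩)⟩
        exact hdist v hvU' w hwU' hvw
    · -- convexity of the preference sets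
      intro a b
      by_cases ha : (a:ℕ) < m <;> by_cases hb : (b:ℕ) < m
      · intro u hu v hv z hgz
        simp only [Set.mem_setOf_eq] at hu hv ⊢
        obtain ⟨huU, huR⟩ := hu
        obtain ⟨hvU, hvR⟩ := hv
        obtain ⟨hzU, hzgeo⟩ := hkey u huU v hvU z hgz
        refine ⟨hzU, ?_⟩
        have hS := hconvS ⟨a, ha⟩ ⟨b, hb⟩
        have h1 : bs u ∈ {i | i ∈ U' ∧ R' i ⟨a, ha⟩ ⟨b, hb⟩} :=
          ⟨hbsU' u huU, (hRR u a b ha hb).mp huR⟩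
        have h2 : bs v ∈ {i | i ∈ U' ∧ R' i ⟨a, ha⟩ ⟨b, hb⟩} :=
          ⟨hbsU' v hvU, (hRR v a b ha hb).mp hvR⟩
        have h3 := hS (bs u) h1 (bs v) h2 (bs z) hzgeo
        exact (hRR z a b ha hb).mpr h3.2
      · have hset : {i | i ∈ U ∧ R'' i a b} = (↑U' : Set V) := by
          ext x
          simp only [Set.mem_setOf_eq, Finset.mem_coe, hmemU']
          constructor
          · rintro ⟨h1, h2⟩
            have := (hRL x a b ha hb).mp h2
            exact ⟨h1, fun hh => this ((hmemW x).mpr ⟨h1, hh⟩)⟩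
          · rintro ⟨h1, h2⟩
            exact ⟨h1, (hRL x a b ha hb).mpr (fun hh => h2 ((hmemW x).mp hh).2)⟩
        rw [hset]; exact hU'conv
      · have hset : {i | i ∈ U ∧ R'' i a b} = (↑WU : Set V) := by
          ext x
          simp only [Set.mem_setOf_eq, Finset.mem_coe]
          constructor
          · rintro ⟨h1, h2⟩
            exact (hLR x a b ha hb).mp h2
          · intro h1
            exact ⟨hWsub h1, (hLR x a b ha hb).mpr h1⟩
        rw [hset]; exact hWconv
      · have hset : {i | i ∈ U ∧ R'' i a b} = (∅ : Set V) := by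
          ext x
          simp only [Set.mem_setOf_eq, Set.mem_empty_iff_false, iff_false, not_and]
          intro _
          exact hLL x a b ha hb
        rw [hset]; exact gconvex_empty

end MG5

/-- Every median graph on `n` vertices admits a reduced intermediate profile
using at most `n` alternatives. -/
theorem stmt8 {V : Type*} [Fintype V] (G : SimpleGraph V) (hG : MedianGraph G) :
    ∃ m : ℕ, m ≤ Fintype.card V ∧
      ∃ R : V → Fin m → Fin m → Prop,
        (∀ v, IsStrictTotalOrder (Fin m) (R v)) ∧
        Function.Injective R ∧
        Intermediate G R := by
  classical
  cases isEmpty_or_nonempty V with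
  | inl h =>
    refine ⟨0, Nat.zero_le _, fun _ _ _ => False, ?_, ?_, ?_⟩
    · intro v
      exact (h.false v).elim
    · intro a b _
      exact (h.false a).elim
    · intro a b
      exact a.elim0
  | inr h =>
    obtain ⟨m, _, hm2, R, hSTO, hdist, hconv⟩ :=
      MG5.inner hG Finset.univ.card Finset.univ rfl
        Finset.univ_nonempty
        (fun u _ v _ w _ => Finset.mem_coe.mpr (Finset.mem_univ w))
    refine ⟨m, by rwa [Finset.card_univ] at hm2, R,
      fun v => hSTO v (Finset.mem_univ v), ?_, ?_⟩
    · intro v w heq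
      by_contra hne
      exact hdist v (Finset.mem_univ v) w (Finset.mem_univ w) hne heq
    · intro a b
      have hs : {i | R i a b} = {i | i ∈ Finset.univ ∧ R i a b} := by
        ext x; simp
      show GConvex G {i | R i a b}
      rw [hs]
      exact hconv a b
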